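/- Let g ∈ F_{q^m}[x] have no roots in F_{q^m}, let L be a tuple of pairwise distinct elements of F_{q^m}, and set e = q^{m-1}+⋯+q. Then the classical q-ary Goppa codes Γ(L, g^e) and Γ(L, g^{e+1}) are equal. -/

import Mathlib

open Polynomial

lemma geom_expand {K : Type*} [Field K] (p k : ℕ) [Fact p.Prime] [CharP K p] (γ : K) :
    (X + C γ) ^ (p ^ k - 1) =
      ∑ i ∈ Finset.range (p ^ k), X ^ i * C (-γ) ^ (p ^ k - 1 - i) := by
  have hQ : 1 ≤ p ^ k := Nat.one_le_pow _ _ (Fact.out : p.Prime).pos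
  have key := geom_sum₂_mul (X : K[X]) (C (-γ)) (p ^ k)
  have h2 : (X : K[X]) - C (-γ) = X + C γ := by rw [map_neg, sub_neg_eq_add]
  have hneg : (C (-γ) : K[X]) ^ p ^ k = -(C γ) ^ p ^ k := by
    rw [← map_pow, ← map_pow, neg_pow, neg_one_pow_char_pow, neg_one_mul, map_neg]
  have h3 : (X : K[X]) ^ p ^ k - C (-γ) ^ p ^ k = (X + C γ) ^ p ^ k := by
    rw [hneg, sub_neg_eq_add, ← add_pow_char_pow]
  rw [h2, h3] at key
  have h4 : (X + C γ) ^ p ^ k = (X + C γ) ^ (p ^ k - 1) * (X + C γ) := by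
    rw [← pow_succ]
    congr 1
    omega
  rw [h4] at key
  exact (mul_right_cancel₀ (X_add_C_ne_zero γ) key).symm

lemma coeff_X_add_C_pow {K : Type*} [Field K] (p k : ℕ) [Fact p.Prime] [CharP K p]
    (γ : K) (t : ℕ) (ht : t ≤ p ^ k - 1) :
    coeff ((X + C γ) ^ (p ^ k - 1)) t = (-1) ^ (p ^ k - 1 - t) * γ ^ (p ^ k - 1 - t) := by
  have hQ : 1 ≤ p ^ k := Nat.one_le_pow _ _ (Fact.out : p.Prime).pos
  rw [geom_expand p k γ, finset_sum_coeff]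
  rw [Finset.sum_eq_single t]
  · rw [mul_comm (X ^ t : K[X]) _, ← map_pow, coeff_C_mul, coeff_X_pow, if_pos rfl, mul_one,
      neg_pow]
  · intro i _ hit
    rw [mul_comm (X ^ i : K[X]) _, ← map_pow, coeff_C_mul, coeff_X_pow,
      if_neg (fun h => hit h.symm), mul_zero]
  · intro hnt
    exact absurd (Finset.mem_range.mpr (by omega)) hnt


lemma u_zero_core {K : Type*} [Field K] (q N R e a : ℕ) (θ : K) (u : ℕ → K)
    (hq2 : 2 ≤ q) (hRe : R = e + 1) (hqe : q ≤ e) (hqR : q * R = N + R)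
    (ha1 : 1 ≤ a) (hdeg : 2 * (a * e) ≤ N)
    (hR1 : ∀ r, u (q * r) = u r ^ q)
    (hR2 : ∀ j, u ((N + 1) + j) = θ * u j + u (j + 1))
    (hz : ∀ s, 1 ≤ s → s < a * e → u (N - s) = 0) :
    ∀ t, 1 ≤ t → t < a * R → u (N - t) = 0 := by
  have he1 : 1 ≤ e := by omega
  have haRae : a * R = a * e + a := by rw [hRe, Nat.mul_add, Nat.mul_one]
  have haae : a * 1 ≤ a * e := Nat.mul_le_mul_left a he1
  rw [Nat.mul_one] at haae
  have haRN : a * R ≤ N := by omega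
  -- propagation lemma
  have LR : ∀ k x, k ≤ x → (∀ y, x - k ≤ y → y ≤ x → u y = 0) → u (x + k * N) = 0 := by
    intro k
    induction k with
    | zero => intro x _ h; simpa using h x (by omega) le_rfl
    | succ k ih =>
      intro x hkx hwin
      have hx1 : 1 ≤ x := by omega
      have hrw : x + (k + 1) * N = (N + 1) + ((x - 1) + k * N) := by
        have hh : k * N + N = (k + 1) * N := by ring
        omega
      rw [hrw, hR2]
      have h1 : u ((x - 1) + k * N) = 0 :=
        ih (x - 1) (by omega) (fun y hy1 hy2 => hwin y (by omega) (by omega))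
      have h2 : u (x + k * N) = 0 :=
        ih x (by omega) (fun y hy1 hy2 => hwin y (by omega) (by omega))
      have hrw2 : (x - 1) + k * N + 1 = x + k * N := by omega
      rw [hrw2, h1, h2, mul_zero, add_zero]
  -- a < q
  have haq : a < q := by
    by_contra hc
    push_neg at hc
    have h1 : q * e ≤ a * e := Nat.mul_le_mul_right e hc
    have h2 : q * R = q * e + q := by rw [hRe, Nat.mul_add, Nat.mul_one]
    have h3 : q * 1 ≤ q * e := Nat.mul_le_mul_left q he1
    omega
  intro t ht1 ht2
  by_cases hte : t < a * e
  · exact hz t ht1 hte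
  push_neg at hte
  set j := a * R - t with hj
  have hj1 : 1 ≤ j := by omega
  have hja : j ≤ a := by omega
  set k := q - 1 - a with hk
  have hak : a + k + 1 = q := by omega
  set x := N + q * j - a * R with hx
  have f1 : q * t + q * j = q * (a * R) := by
    rw [← Nat.mul_add]
    congr 1
    omega
  have f2 : q * (a * R) = a * N + a * R := by
    rw [Nat.mul_left_comm, hqR, Nat.mul_add]
  have htN : t ≤ N := by omega
  have f5 : q * (N - t) + q * t = q * N := by
    rw [← Nat.mul_add]
    congr 1
    omega
  have f6 : q * N = a * N + k * N + N := by
    rw [← hak]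
    ring
  have f7 : q ≤ q * j := Nat.le_mul_of_pos_right q (by omega)
  have f8 : q * j ≤ q * a := Nat.mul_le_mul_left q hja
  have f9 : a * q + a ≤ a * R := by
    have h := Nat.mul_le_mul_left a (show q + 1 ≤ R by omega)
    rw [Nat.mul_add, Nat.mul_one] at h
    exact h
  have f10 : q * a = a * q := Nat.mul_comm q a
  have hkx : k ≤ x := by omega
  have hqNt : q * (N - t) = x + k * N := by omega
  have hwin : ∀ y, x - k ≤ y → y ≤ x → u y = 0 := by
    intro y hy1 hy2
    have hs1 : 1 ≤ N - y := by omega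
    have hs2 : N - y < a * e := by omega
    have hy : u (N - (N - y)) = 0 := hz (N - y) hs1 hs2
    rwa [(by omega : N - (N - y) = y)] at hy
  have h0 : u (x + k * N) = 0 := LR k x hkx hwin
  have hfin : u (N - t) ^ q = 0 := by rw [← hR1, hqNt, h0]
  exact pow_eq_zero_iff (by omega : q ≠ 0) |>.mp hfin

lemma per_root {K : Type*} [Field K] (p nn mm : ℕ) [Fact p.Prime] [CharP K p]
    (q N R e a : ℕ) (hqpn : q = p ^ nn) (hqm : N + 1 = q ^ mm)
    (hq2 : 2 ≤ q) (hRe : R = e + 1) (hqe : q ≤ e) (hqR : q * R = N + R) (ha1 : 1 ≤ a)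
    {n : ℕ} (w d : Fin n → K) (hw : ∀ i, w i ^ q = w i) (hd : ∀ i, d i ^ q ^ mm = d i)
    {TK : K[X]} (hT : TK = ∑ i, C (w i) * ((X - C (d i)) ^ N - 1))
    (β : K) (hdeg : 2 * (a * e) ≤ N)
    (hdvd : (X - C β) ^ (a * e) ∣ TK) :
    (X - C β) ^ (a * R) ∣ TK := by
  haveI : ExpChar K p := ExpChar.prime Fact.out
  have hqmp : q ^ mm = p ^ (nn * mm) := by rw [hqpn, ← pow_mul]
  have he1 : 1 ≤ e := by omega
  have hae1 : 1 ≤ a * e := by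
    have := Nat.mul_le_mul ha1 he1
    omega
  have haRae : a * R = a * e + a := by rw [hRe, Nat.mul_add, Nat.mul_one]
  have haae : a * 1 ≤ a * e := Nat.mul_le_mul_left a he1
  rw [Nat.mul_one] at haae
  have haRN : a * R ≤ N := by omega
  have hN : N = p ^ (nn * mm) - 1 := by omega
  -- sum_comp helper
  have sum_comp : ∀ (f : Fin n → K[X]) (W : K[X]),
      (∑ i, f i).comp W = ∑ i, (f i).comp W := by
    intro f W
    classical
    induction (Finset.univ : Finset (Fin n)) using Finset.induction with
    | empty => simp
    | insert _ _ hnot ih => simp [Finset.sum_insert hnot, add_comp, ih]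
  -- the shifted polynomial
  set Tsh : K[X] := TK.comp (X + C β) with hTshdef
  have hcompback : Tsh.comp (X - C β) = TK := by
    rw [hTshdef, comp_assoc]
    simp [add_comp, sub_comp, X_comp, C_comp]
  have hXae : (X : K[X]) ^ (a * e) ∣ Tsh := by
    obtain ⟨h, hh⟩ := hdvd
    refine ⟨h.comp (X + C β), ?_⟩
    rw [hTshdef, hh, mul_comp, pow_comp, sub_comp, X_comp, C_comp, add_sub_cancel_right]
  -- shifted formula
  have hTsh : Tsh = ∑ i, C (w i) * ((X + C (β - d i)) ^ N - 1) := by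
    rw [hTshdef, hT, sum_comp]
    refine Finset.sum_congr rfl fun i _ => ?_
    rw [mul_comp, C_comp, sub_comp, pow_comp, sub_comp, X_comp, C_comp, one_comp]
    congr 2
    rw [map_sub]
    ring
  set u : ℕ → K := fun r => ∑ i, w i * (β - d i) ^ r with hu
  -- coefficient formula
  have hcoeff : ∀ t, 1 ≤ t → t ≤ N → Tsh.coeff t = (-1) ^ (N - t) * u (N - t) := by
    intro t ht1 htN
    rw [hTsh, finset_sum_coeff]
    have : ∀ i : Fin n, (C (w i) * ((X + C (β - d i)) ^ N - 1)).coeff t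
        = (-1) ^ (N - t) * (w i * (β - d i) ^ (N - t)) := by
      intro i
      rw [coeff_C_mul, coeff_sub, coeff_one, if_neg (by omega : ¬ t = 0), sub_zero]
      rw [hN] at htN ⊢
      rw [coeff_X_add_C_pow p (nn * mm) _ t htN]
      ring
    rw [Finset.sum_congr rfl fun i _ => this i, hu, ← Finset.mul_sum]
  -- relations
  have hR1 : ∀ r, u (q * r) = u r ^ q := by
    intro r
    rw [hu]
    simp only []
    rw [hqpn, sum_pow_char_pow]
    refine Finset.sum_congr rfl fun i _ => ?_
    rw [mul_pow, ← hqpn, hw, ← pow_mul, Nat.mul_comm r q]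
  set θ : K := β ^ q ^ mm - β with hθ
  have hR2 : ∀ j, u ((N + 1) + j) = θ * u j + u (j + 1) := by
    intro j
    rw [hu]
    simp only []
    rw [Finset.mul_sum, ← Finset.sum_add_distrib]
    refine Finset.sum_congr rfl fun i _ => ?_
    have hpow : (β - d i) ^ ((N + 1) + j) = ((β ^ q ^ mm - d i)) * (β - d i) ^ j := by
      rw [pow_add, hqm]
      congr 1
      rw [hqmp, sub_pow_char_pow, ← hqmp, hd]
    rw [hpow, hθ]
    ring
  -- zeros from hypothesis
  have hz : ∀ s, 1 ≤ s → s < a * e → u (N - s) = 0 := by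
    intro s hs1 hs2
    have hc0 : Tsh.coeff s = 0 := X_pow_dvd_iff.mp hXae s hs2
    rw [hcoeff s hs1 (by omega)] at hc0
    have hne : ((-1 : K) ^ (N - s)) ≠ 0 := pow_ne_zero _ (by norm_num)
    exact (mul_eq_zero.mp hc0).resolve_left hne
  have hcore := u_zero_core q N R e a θ u hq2 hRe hqe hqR ha1 hdeg hR1 hR2 hz
  -- conclude
  have hXaR : (X : K[X]) ^ (a * R) ∣ Tsh := by
    rw [X_pow_dvd_iff]
    intro t ht
    by_cases ht0 : t = 0
    · exact ht0 ▸ X_pow_dvd_iff.mp hXae 0 (by omega)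
    · rw [hcoeff t (by omega) (by omega), hcore t (by omega) ht, mul_zero]
  obtain ⟨h, hh⟩ := hXaR
  refine ⟨h.comp (X - C β), ?_⟩
  rw [← hcompback, hh, mul_comp, pow_comp, X_comp]


/-- The classical `q`-ary Goppa code with support `L` and Goppa polynomial `G`:
codewords `c ∈ F_q^n` such that `Σ_i c_i/(x - α_i) ≡ 0 mod G`, i.e. `G`
divides `Σ_i c_i Π_{j ≠ i} (x - α_j)`. -/
def goppaCode (F E : Type*) [Field F] [Field E] [Algebra F E]
    {n : ℕ} (L : Fin n → E) (G : E[X]) : Set (Fin n → F) :=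
  {c | G ∣ ∑ i : Fin n, Polynomial.C (algebraMap F E (c i)) *
      ∏ j ∈ Finset.univ.erase i, (Polynomial.X - Polynomial.C (L j))}

/-- Main theorem: if `g` has no roots in `F_{q^m}` then
`Γ(L, g^e) = Γ(L, g^{e+1})` where `e = q^{m-1}+⋯+q`. -/
theorem stmt16 (F E : Type*) [Field F] [Fintype F] [Field E] [Fintype E]
    [Algebra F E] (q m : ℕ) (hq : Fintype.card F = q)
    (hE : Fintype.card E = q ^ m) (hm : 2 ≤ m)
    (e : ℕ) (he : e = ∑ i ∈ Finset.Ico 1 m, q ^ i)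
    (n : ℕ) (L : Fin n → E) (hL : Function.Injective L)
    (g : Polynomial E) (hroots : ∀ α : E, Polynomial.eval α g ≠ 0) :
    goppaCode F E L (g ^ e) = goppaCode F E L (g ^ (e + 1)) := by
  classical
  have hq2 : 2 ≤ q := hq ▸ Fintype.one_lt_card
  have hm1 : 1 ≤ m := by omega
  -- geometric sum fact
  have hsum : ∀ M : ℕ, 1 ≤ M →
      q * (∑ i ∈ Finset.Ico 1 M, q ^ i) + q = (∑ i ∈ Finset.Ico 1 M, q ^ i) + q ^ M := by
    intro M hM
    induction M with
    | zero => omega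
    | succ M ih =>
      rcases Nat.lt_or_ge M 1 with h1 | h1
      · interval_cases M
        simp
      · rw [Finset.sum_Ico_succ_top h1]
        have hih := ih h1
        have e1 : q * ((∑ i ∈ Finset.Ico 1 M, q ^ i) + q ^ M)
            = q * (∑ i ∈ Finset.Ico 1 M, q ^ i) + q * q ^ M := by ring
        have e2 : q ^ (M + 1) = q * q ^ M := by ring
        omega
  have hqe : q ≤ e := by
    have h1m : (1 : ℕ) ∈ Finset.Ico 1 m := by
      simp only [Finset.mem_Ico]
      omega
    calc q = q ^ 1 := (pow_one q).symm
    _ ≤ _ := he ▸ Finset.single_le_sum (f := fun i => q ^ i) (fun i _ => Nat.zero_le _) h1m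
  set N := q ^ m - 1 with hNdef
  have hqm_pos : 1 ≤ q ^ m := Nat.one_le_pow _ _ (by omega)
  have hNq : N + 1 = q ^ m := by omega
  set R := e + 1 with hRdef
  have hqR : q * R = N + R := by
    have hsum' : q * e + q = e + q ^ m := by rw [he]; exact hsum m hm1
    have h1 : q * R = q * e + q := by rw [hRdef, Nat.mul_add, Nat.mul_one]
    omega
  -- characteristic
  set p := ringChar F with hpdef
  haveI : CharP F p := ringChar.charP F
  have hp : p.Prime := CharP.char_is_prime F p
  haveI : Fact p.Prime := ⟨hp⟩
  obtain ⟨nn, -, hFcard⟩ := FiniteField.card F p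
  have hqpn : q = p ^ (nn : ℕ) := by rw [← hq, hFcard]
  haveI : CharP E p := charP_of_injective_algebraMap (algebraMap F E).injective p
  have hqmp : q ^ m = p ^ ((nn : ℕ) * m) := by rw [hqpn, ← pow_mul]
  -- reduce to divisibility
  ext c
  simp only [goppaCode, Set.mem_setOf_eq]
  set S : E[X] := ∑ i, C (algebraMap F E (c i)) *
      ∏ j ∈ Finset.univ.erase i, (X - C (L j)) with hS
  constructor
  case mpr => exact fun h => dvd_trans (pow_dvd_pow g (by omega)) h
  intro hdvd
  by_cases hS0 : S = 0
  · rw [hS0]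
    exact dvd_zero _
  -- the full product identity
  have hPROD : ∏ α ∈ (Finset.univ : Finset E), (X - C α) = X ^ q ^ m - X := by
    rw [← hE]
    have hmonic : (X ^ Fintype.card E - X : E[X]).Monic := by
      apply monic_X_pow_sub
      rw [degree_X]
      exact_mod_cast (Fintype.one_lt_card : 1 < Fintype.card E)
    have hdegN : (X ^ Fintype.card E - X : E[X]).natDegree = Fintype.card E :=
      FiniteField.X_pow_card_sub_X_natDegree_eq E Fintype.one_lt_card
    have hroots' : (X ^ Fintype.card E - X : E[X]).roots = Finset.univ.val :=
      FiniteField.roots_X_pow_card_sub_X E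
    have hsplits : Splits (X ^ Fintype.card E - X : E[X]) := by
      rw [splits_iff_card_roots, hroots', hdegN]
      simp [Finset.card_univ]
    have hfact := hsplits.eq_prod_roots_of_monic hmonic
    rw [hroots'] at hfact
    rw [Finset.prod_eq_multiset_prod]
    exact hfact.symm
  -- per-element identity
  have hPERA : ∀ α : E, ∏ β ∈ Finset.univ.erase α, (X - C β) = (X - C α) ^ N - 1 := by
    intro α
    have hmul := Finset.mul_prod_erase Finset.univ (fun β => X - C β) (Finset.mem_univ α)
    have hid : (X - C α) * ((X - C α) ^ N - 1) = X ^ q ^ m - X := by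
      have h1 : (X - C α) * ((X - C α) ^ N - 1) = (X - C α) ^ (N + 1) - (X - C α) := by
        ring
      have h2 : ((X : E[X]) - C α) ^ (N + 1) = X ^ q ^ m - C α := by
        rw [hNq, hqmp, sub_pow_char_pow, ← map_pow, ← hqmp]
        congr 2
        rw [← hE]
        exact FiniteField.pow_card α
      rw [h1, h2]
      ring
    have hcomb : (X - C α) * ∏ β ∈ Finset.univ.erase α, (X - C β)
        = (X - C α) * ((X - C α) ^ N - 1) := by
      rw [hid]
      rw [← hPROD]
      exact hmul
    exact mul_left_cancel₀ (X_sub_C_ne_zero α) hcomb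
  -- support completion: T = M * S
  set M : E[X] := ∏ β ∈ Finset.univ \ Finset.image L Finset.univ, (X - C β) with hM
  set T : E[X] := ∑ i, C (algebraMap F E (c i)) * ((X - C (L i)) ^ N - 1) with hT
  have hTM : T = M * S := by
    have hterm : ∀ i : Fin n, ((X : E[X]) - C (L i)) ^ N - 1
        = M * ∏ j ∈ Finset.univ.erase i, (X - C (L j)) := by
      intro i
      rw [← hPERA (L i)]
      have hsplit : (Finset.univ : Finset E).erase (L i)
          = (Finset.univ \ Finset.image L Finset.univ)
            ∪ (Finset.image L Finset.univ).erase (L i) := by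
        ext β
        constructor
        · intro hβ
          have hne : β ≠ L i := (Finset.mem_erase.mp hβ).1
          by_cases hβ2 : β ∈ Finset.image L Finset.univ
          · exact Finset.mem_union_right _ (Finset.mem_erase.mpr ⟨hne, hβ2⟩)
          · exact Finset.mem_union_left _ (Finset.mem_sdiff.mpr ⟨Finset.mem_univ β, hβ2⟩)
        · intro hβ
          rcases Finset.mem_union.mp hβ with h | h
          · refine Finset.mem_erase.mpr ⟨?_, Finset.mem_univ β⟩
            intro heq
            exact (Finset.mem_sdiff.mp h).2 (heq ▸ Finset.mem_image_of_mem L (Finset.mem_univ i))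
          · exact Finset.mem_erase.mpr ⟨(Finset.mem_erase.mp h).1, Finset.mem_univ β⟩
      have hdisj : Disjoint (Finset.univ \ Finset.image L Finset.univ)
          ((Finset.image L Finset.univ).erase (L i)) :=
        Finset.disjoint_of_subset_right (Finset.erase_subset _ _) Finset.sdiff_disjoint
      rw [hsplit, Finset.prod_union hdisj, ← Finset.image_erase hL,
        Finset.prod_image (fun x _ y _ h => hL h)]
    rw [hT, hS, Finset.mul_sum]
    refine Finset.sum_congr rfl fun i _ => ?_
    rw [hterm i]
    ring
  have hTdvd : g ^ e ∣ T := by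
    rw [hTM]
    exact Dvd.dvd.mul_left hdvd M
  have hMne : M ≠ 0 :=
    Monic.ne_zero (monic_prod_of_monic _ _ (fun β _ => monic_X_sub_C β))
  have hTne : T ≠ 0 := by
    rw [hTM]
    exact mul_ne_zero hMne hS0
  have hg0 : g ≠ 0 := fun h => hroots 0 (by rw [h, eval_zero])
  -- move to the splitting field
  set K := g.SplittingField with hK
  set ψ : E →+* K := algebraMap E K with hψ
  haveI : CharP K p := charP_of_injective_algebraMap (algebraMap E K).injective p
  haveI : ExpChar K p := ExpChar.prime Fact.out
  set wK : Fin n → K := fun i => ψ (algebraMap F E (c i)) with hwKdef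
  set dK : Fin n → K := fun i => ψ (L i) with hdKdef
  set TK : K[X] := T.map ψ with hTKdef
  have hTKform : TK = ∑ i, C (wK i) * ((X - C (dK i)) ^ N - 1) := by
    rw [hTKdef, hT, Polynomial.map_sum]
    refine Finset.sum_congr rfl fun i _ => ?_
    simp only [Polynomial.map_mul, Polynomial.map_sub, Polynomial.map_pow, Polynomial.map_one,
      map_C, map_X]
    rfl
  have hw : ∀ i, wK i ^ q = wK i := by
    intro i
    have hcq : (c i) ^ q = c i := by
      rw [← hq]
      exact FiniteField.pow_card (c i)
    rw [hwKdef]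
    simp only []
    rw [← map_pow, ← map_pow, hcq]
  have hd : ∀ i, dK i ^ q ^ m = dK i := by
    intro i
    rw [hdKdef]
    simp only []
    rw [← map_pow]
    congr 1
    rw [← hE]
    exact FiniteField.pow_card (L i)
  set gK : K[X] := g.map ψ with hgKdef
  have hgK0 : gK ≠ 0 := (Polynomial.map_ne_zero_iff ψ.injective).mpr hg0
  have hTKne : TK ≠ 0 := (Polynomial.map_ne_zero_iff ψ.injective).mpr hTne
  have hdvdTK : gK ^ e ∣ TK := by
    rw [hgKdef, hTKdef, ← Polynomial.map_pow]
    exact Polynomial.map_dvd ψ hTdvd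
  -- frobenius fixes TK
  set χ : K →+* K := iterateFrobenius K p ((nn : ℕ) * m) with hχdef
  have hχval : ∀ x : K, χ x = x ^ q ^ m := by
    intro x
    rw [hχdef, iterateFrobenius_def, ← hqmp]
  have fixpow : ∀ x : K, x ^ q = x → ∀ k : ℕ, x ^ q ^ k = x := by
    intro x hx k
    induction k with
    | zero => rw [pow_zero, pow_one]
    | succ k ih => rw [pow_succ, pow_mul, ih, hx]
  have hχT : TK.map χ = TK := by
    rw [hTKform, Polynomial.map_sum]
    refine Finset.sum_congr rfl fun i _ => ?_
    rw [Polynomial.map_mul, Polynomial.map_sub, Polynomial.map_pow, Polynomial.map_sub,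
      Polynomial.map_one, map_C, map_X, map_C, hχval, hχval, fixpow _ (hw i) m, hd i]
  have hdegTK : TK.natDegree ≤ N := by
    rw [hTKform]
    apply Polynomial.natDegree_sum_le_of_forall_le
    intro i _
    calc (C (wK i) * ((X - C (dK i)) ^ N - 1)).natDegree
        ≤ (C (wK i)).natDegree + ((X - C (dK i)) ^ N - 1).natDegree := natDegree_mul_le
    _ ≤ N := by
        rw [natDegree_C, zero_add]
        refine le_trans (natDegree_sub_le _ _) ?_
        simp [natDegree_pow, natDegree_X_sub_C]
  -- linear coprimality
  have coprime_lin : ∀ β β' : K, β ≠ β' → IsCoprime ((X : K[X]) - C β) (X - C β') := by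
    intro β β' hne
    have h0 : β' - β ≠ 0 := sub_ne_zero.mpr (Ne.symm hne)
    refine ⟨C (β' - β)⁻¹, -C (β' - β)⁻¹, ?_⟩
    have hlin : C (β' - β)⁻¹ * (X - C β) + -C (β' - β)⁻¹ * (X - C β')
        = C (β' - β)⁻¹ * C (β' - β) := by
      rw [C_sub]
      ring
    rw [hlin, ← C_mul, inv_mul_cancel₀ h0, C_1]
  have hsplits : Splits gK := by
    rw [hgKdef]
    exact SplittingField.splits g
  have hroot_notE : ∀ β : K, IsRoot gK β → ∀ α : E, ψ α ≠ β := by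
    intro β hβ α hα
    apply hroots α
    have h1 : eval β gK = ψ (eval α g) := by
      rw [← hα, hgKdef, eval_map, eval₂_at_apply]
    apply ψ.injective
    rw [← h1, hβ, map_zero]
  have hfixE : ∀ β : K, β ^ q ^ m = β → ∃ α : E, ψ α = β := by
    intro β hfix
    have hprodK : ∏ α ∈ (Finset.univ : Finset E), (X - C (ψ α)) = X ^ q ^ m - X := by
      have hmap := congrArg (Polynomial.map ψ) hPROD
      rw [Polynomial.map_prod] at hmap
      simpa only [Polynomial.map_sub, Polynomial.map_pow, map_X, map_C] using hmap
    have heval : eval β (∏ α ∈ (Finset.univ : Finset E), (X - C (ψ α))) = 0 := by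
      rw [hprodK]
      simp [hfix]
    rw [eval_prod] at heval
    obtain ⟨α, -, hα⟩ := Finset.prod_eq_zero_iff.mp heval
    refine ⟨α, ?_⟩
    simp only [eval_sub, eval_X, eval_C] at hα
    exact (sub_eq_zero.mp hα).symm
  -- per-root divisibility
  have hroot_dvd : ∀ β ∈ gK.roots.toFinset,
      (X - C β) ^ (rootMultiplicity β gK * R) ∣ TK := by
    intro β hβmem
    have hβroot : IsRoot gK β :=
      (Polynomial.mem_roots hgK0).mp (Multiset.mem_toFinset.mp hβmem)
    set a := rootMultiplicity β gK with ha
    have ha1 : 1 ≤ a := (rootMultiplicity_pos hgK0).mpr hβroot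
    have hXa : (X - C β) ^ a ∣ gK := pow_rootMultiplicity_dvd gK β
    have hae_dvd : (X - C β) ^ (a * e) ∣ TK := by
      rw [pow_mul]
      exact dvd_trans (pow_dvd_pow_of_dvd hXa e) hdvdTK
    set β' := β ^ q ^ m with hβ'
    have hββ' : β' ≠ β := by
      intro hfix
      obtain ⟨α, hα⟩ := hfixE β (hβ' ▸ hfix)
      exact hroot_notE β hβroot α hα
    have hβ'dvd : (X - C β') ^ (a * e) ∣ TK := by
      have hmap := Polynomial.map_dvd χ hae_dvd
      rw [hχT] at hmap
      rwa [Polynomial.map_pow, Polynomial.map_sub, map_X, map_C, hχval] at hmap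
    have hcop : IsCoprime ((X - C β) ^ (a * e)) ((X - C β') ^ (a * e)) :=
      (coprime_lin β β' (Ne.symm hββ')).pow
    have hmul_dvd := hcop.mul_dvd hae_dvd hβ'dvd
    have hdeg2 : 2 * (a * e) ≤ N := by
      have hd1 : (((X - C β) ^ (a * e)) * ((X - C β') ^ (a * e))).natDegree = a * e + a * e := by
        rw [natDegree_mul (pow_ne_zero _ (X_sub_C_ne_zero β)) (pow_ne_zero _ (X_sub_C_ne_zero β'))]
        simp [natDegree_pow, natDegree_X_sub_C]
      have h1 := Polynomial.natDegree_le_of_dvd hmul_dvd hTKne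
      rw [hd1] at h1
      omega
    exact per_root p nn m q N R e a hqpn hNq hq2 hRdef hqe hqR ha1 wK dK hw hd
      hTKform β hdeg2 hae_dvd
  -- assemble the product
  have hpair : ((gK.roots.toFinset : Finset K) : Set K).Pairwise
      (Function.onFun IsCoprime fun β => (X - C β) ^ (gK.roots.count β * R)) := by
    intro β _ β' _ hne
    exact (coprime_lin β β' hne).pow
  have hprod_dvd : ∏ β ∈ gK.roots.toFinset, (X - C β) ^ (gK.roots.count β * R) ∣ TK := by
    apply Finset.prod_dvd_of_coprime hpair
    intro β hβ
    rw [count_roots]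
    exact hroot_dvd β hβ
  have hgKfact : gK = C gK.leadingCoeff * (gK.roots.map fun β => X - C β).prod :=
    hsplits.eq_prod_roots
  have hprodR : ((gK.roots.map fun β => X - C β).prod) ^ R ∣ TK := by
    have hfact2 : (gK.roots.map fun β => X - C β).prod
        = ∏ β ∈ gK.roots.toFinset, (X - C β) ^ gK.roots.count β :=
      Finset.prod_multiset_map_count _ _
    rw [hfact2, ← Finset.prod_pow]
    have hcongr : ∀ β ∈ gK.roots.toFinset,
        ((X - C β) ^ gK.roots.count β) ^ R = (X - C β) ^ (gK.roots.count β * R) :=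
      fun β _ => by rw [← pow_mul]
    rw [Finset.prod_congr rfl hcongr]
    exact hprod_dvd
  have hgKR : gK ^ R ∣ TK := by
    have hunit : IsUnit (C gK.leadingCoeff ^ R) := by
      apply IsUnit.pow
      rw [Polynomial.isUnit_C]
      exact (leadingCoeff_ne_zero.mpr hgK0).isUnit
    rw [hgKfact, mul_pow, mul_comm]
    exact (IsUnit.mul_right_dvd hunit).mpr hprodR
  -- descend to E[X]
  have hmapdvd : (g ^ R).map ψ ∣ T.map ψ := by
    rw [Polynomial.map_pow]
    exact hgKR
  have hgR_T : g ^ R ∣ T := (Polynomial.map_dvd_map' ψ).mp hmapdvd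
  -- strip M using coprimality
  have hcopM : IsCoprime (g ^ R) M := by
    apply IsCoprime.pow_left
    rw [hM]
    apply IsCoprime.prod_right
    intro β _
    have hv : eval β g ≠ 0 := hroots β
    have hmod := Polynomial.modByMonic_add_div g (X - C β)
    rw [Polynomial.modByMonic_X_sub_C_eq_C_eval] at hmod
    set v : E := eval β g with hvdef
    set dq : E[X] := g /ₘ (X - C β) with hdqdef
    refine ⟨C v⁻¹, -(C v⁻¹ * dq), ?_⟩
    calc C v⁻¹ * g + -(C v⁻¹ * dq) * (X - C β)
        = C v⁻¹ * (C v + (X - C β) * dq) + -(C v⁻¹ * dq) * (X - C β) := by rw [hmod]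
      _ = C v⁻¹ * C v := by ring
      _ = 1 := by rw [← C_mul, inv_mul_cancel₀ hv, C_1]
  exact hcopM.dvd_of_dvd_mul_left (by rw [← hTM]; exact hgR_T)
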